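/- Let H be a real Hilbert space, K a nonempty convex subset of H, g : H → H a map, p > 1, μ > 0, and F : H → ℝ Fréchet differentiable and higher order strongly general convex with respect to g, i.e. F(g u + t·(g v − g u)) ≤ (1−t)·F(g u) + t·F(g v) − μ·(t^p·(1−t) + t·(1−t)^p)·‖g v − g u‖^p for all u, v with g u, g v ∈ K and all t ∈ [0,1]. Then ⟨∇F(g u) − ∇F(g v), g u − g v⟩ ≥ 2μ·‖g v − g u‖^p for all u, v ∈ H with g u, g v ∈ K. -/

import Mathlib

open scoped RealInnerProductSpace
open Filter Topology

theorem stmt_9 {H : Type*} [NormedAddCommGroup H] [InnerProductSpace ℝ H] [CompleteSpace H]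
    (K : Set H) (hK : K.Nonempty) (hKconv : Convex ℝ K)
    (g : H → H) (p μ : ℝ) (hp : 1 < p) (hμ : 0 < μ)
    (F : H → ℝ) (F' : H → H) (hF : ∀ x : H, HasGradientAt F (F' x) x)
    (hconv : ∀ u v : H, g u ∈ K → g v ∈ K → ∀ t ∈ Set.Icc (0 : ℝ) 1,
      F (g u + t • (g v - g u)) ≤ (1 - t) * F (g u) + t * F (g v)
        - μ * (t ^ p * (1 - t) + t * (1 - t) ^ p) * ‖g v - g u‖ ^ p) :
    ∀ u v : H, g u ∈ K → g v ∈ K →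
      2 * μ * ‖g v - g u‖ ^ p ≤ ⟪F' (g u) - F' (g v), g u - g v⟫ := by
  have key : ∀ u v : H, g u ∈ K → g v ∈ K →
      ⟪F' (g u), g v - g u⟫ ≤ F (g v) - F (g u) - μ * ‖g v - g u‖ ^ p := by
    intro u v hu hv
    set d := g v - g u with hd
    -- derivative of t ↦ F (g u + t • d) at 0
    have hline : HasDerivAt (fun t : ℝ => g u + t • d) d 0 := by
      simpa using ((hasDerivAt_id (0:ℝ)).smul_const d).const_add (g u)
    have hFd : HasFDerivAt F (InnerProductSpace.toDual ℝ H (F' (g u))) (g u + (0:ℝ) • d) := by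
      simpa using (hF (g u)).hasFDerivAt
    have hder : HasDerivAt (fun t : ℝ => F (g u + t • d)) ⟪F' (g u), d⟫ 0 := by
      have := hFd.comp_hasDerivAt 0 hline
      exact this
    have hslope : Tendsto (slope (fun t : ℝ => F (g u + t • d)) 0) (𝓝[>] (0:ℝ))
        (𝓝 ⟪F' (g u), d⟫) :=
      (hasDerivAt_iff_tendsto_slope.mp hder).mono_left
        (nhdsWithin_mono _ (fun x hx => ne_of_gt hx))
    -- the bound function
    have hψ : Tendsto (fun t : ℝ => (F (g v) - F (g u))
        - μ * (t ^ (p-1) * (1 - t) + (1 - t) ^ p) * ‖d‖ ^ p) (𝓝[>] (0:ℝ))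
        (𝓝 (F (g v) - F (g u) - μ * ‖d‖ ^ p)) := by
      have h1 : ContinuousAt (fun t : ℝ => t ^ (p-1)) 0 :=
        Real.continuousAt_rpow_const 0 (p-1) (Or.inr (by linarith))
      have h2 : ContinuousAt (fun t : ℝ => (1 - t) ^ p) 0 := by
        have hc : ContinuousAt (fun t : ℝ => (1 : ℝ) - t) 0 := by fun_prop
        exact hc.rpow_const (Or.inl (by norm_num))
      have hc : ContinuousAt (fun t : ℝ => (F (g v) - F (g u))
          - μ * (t ^ (p-1) * (1 - t) + (1 - t) ^ p) * ‖d‖ ^ p) 0 := by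
        fun_prop
      have := hc.tendsto.mono_left (nhdsWithin_le_nhds (s := Set.Ioi (0:ℝ)))
      simpa [Real.zero_rpow (by linarith : p - 1 ≠ 0), Real.one_rpow] using this
    refine le_of_tendsto_of_tendsto hslope hψ ?_
    filter_upwards [Ioc_mem_nhdsGT_of_mem (Set.mem_Ico.mpr ⟨le_refl (0:ℝ), one_pos⟩)]
      with t ht
    obtain ⟨ht0, ht1⟩ := ht
    have hcv := hconv u v hu hv t ⟨ht0.le, ht1⟩
    have hrp : t ^ (p-1) * t = t ^ p := by
      rw [← Real.rpow_add_one ht0.ne']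
      ring_nf
    rw [slope_def_field]
    simp only [sub_zero, zero_smul, add_zero]
    rw [div_le_iff₀ ht0]
    rw [← hrp] at hcv
    nlinarith [hcv]
  intro u v hu hv
  have h1 := key u v hu hv
  have h2 := key v u hv hu
  have hn : ‖g u - g v‖ = ‖g v - g u‖ := norm_sub_rev _ _
  rw [hn] at h2
  have e1 : ⟪F' (g u) - F' (g v), g u - g v⟫
      = -⟪F' (g u), g v - g u⟫ - ⟪F' (g v), g u - g v⟫ := by
    rw [inner_sub_left, show (g u - g v : H) = -(g v - g u) from by abel,
      inner_neg_right, inner_neg_right]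
  rw [e1]
  linarith
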